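/- arXiv:1409.4836 — 4 statements merged into one kernel-verified Lean document; each statement's English description precedes it below -/
import Mathlib

section
/- Let y : [T, ∞) → ℝ be nonnegative, differentiable, and satisfy y'(τ) + (1 - C·e^{-τ/2})·y(τ) ≤ A·e^{-τ/2} for all τ ≥ T, with constants A, C > 0. Then there exists a constant K > 0 (depending on A, C, T, y(T)) such that y(τ) ≤ K·e^{-τ/2} for all τ ≥ T. -/
open Real

theorem linear_ode_ineq_half_decay
    (y y' : ℝ → ℝ) (T A C : ℝ) (hA : 0 < A) (hC : 0 < C)
    (hnonneg : ∀ τ ≥ T, 0 ≤ y τ)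
    (hderiv : ∀ τ ≥ T, HasDerivAt y (y' τ) τ)
    (hineq : ∀ τ ≥ T, y' τ + (1 - C * Real.exp (-τ / 2)) * y τ ≤ A * Real.exp (-τ / 2)) :
    ∃ K > 0, ∀ τ ≥ T, y τ ≤ K * Real.exp (-τ / 2) := by
  set D : ℝ := 2 * C * Real.exp (-T / 2) with hD
  set μ : ℝ → ℝ := fun τ => Real.exp (τ + 2 * C * Real.exp (-τ / 2)) with hμ
  have hμpos : ∀ τ, 0 < μ τ := fun τ => Real.exp_pos _
  have hμderiv : ∀ τ, HasDerivAt μ ((1 - C * Real.exp (-τ / 2)) * μ τ) τ := by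
    intro τ
    have h1 : HasDerivAt (fun t : ℝ => -t / 2) (-1 / 2) τ := by
      simpa using ((hasDerivAt_id τ).neg.div_const 2)
    have h2 : HasDerivAt (fun t : ℝ => Real.exp (-t / 2))
        (Real.exp (-τ / 2) * (-1 / 2)) τ := h1.exp
    have h3 : HasDerivAt (fun t : ℝ => t + 2 * C * Real.exp (-t / 2))
        (1 + 2 * C * (Real.exp (-τ / 2) * (-1 / 2))) τ :=
      (hasDerivAt_id τ).add (h2.const_mul (2 * C))
    have h4 := h3.exp
    convert h4 using 1
    ring
  set G : ℝ → ℝ := fun τ => μ τ * y τ - 2 * A * Real.exp D * Real.exp (τ / 2) with hG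
  have hGderiv : ∀ τ ≥ T, HasDerivAt G
      ((1 - C * Real.exp (-τ / 2)) * μ τ * y τ + μ τ * y' τ
        - 2 * A * Real.exp D * (Real.exp (τ / 2) * (1 / 2))) τ := by
    intro τ hτ
    have h5 : HasDerivAt (fun t : ℝ => Real.exp (t / 2)) (Real.exp (τ / 2) * (1 / 2)) τ := by
      have : HasDerivAt (fun t : ℝ => t / 2) (1 / 2) τ := by
        simpa using (hasDerivAt_id τ).div_const 2
      exact this.exp
    exact ((hμderiv τ).mul (hderiv τ hτ)).sub (h5.const_mul (2 * A * Real.exp D))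
  have hkey : ∀ τ ≥ T,
      (1 - C * Real.exp (-τ / 2)) * μ τ * y τ + μ τ * y' τ
        - 2 * A * Real.exp D * (Real.exp (τ / 2) * (1 / 2)) ≤ 0 := by
    intro τ hτ
    have h1 : μ τ * (y' τ + (1 - C * Real.exp (-τ / 2)) * y τ)
        ≤ μ τ * (A * Real.exp (-τ / 2)) :=
      mul_le_mul_of_nonneg_left (hineq τ hτ) (hμpos τ).le
    have h2 : μ τ * (A * Real.exp (-τ / 2)) ≤ A * Real.exp D * Real.exp (τ / 2) := by
      have : μ τ * Real.exp (-τ / 2) = Real.exp (τ / 2 + 2 * C * Real.exp (-τ / 2)) := by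
        rw [hμ, ← Real.exp_add]; ring_nf
      have hle : Real.exp (τ / 2 + 2 * C * Real.exp (-τ / 2))
          ≤ Real.exp (τ / 2 + D) := by
        apply Real.exp_le_exp.2
        have : Real.exp (-τ / 2) ≤ Real.exp (-T / 2) := by
          apply Real.exp_le_exp.2; linarith
        nlinarith
      calc μ τ * (A * Real.exp (-τ / 2)) = A * (μ τ * Real.exp (-τ / 2)) := by ring
        _ = A * Real.exp (τ / 2 + 2 * C * Real.exp (-τ / 2)) := by rw [this]
        _ ≤ A * Real.exp (τ / 2 + D) := by
            exact mul_le_mul_of_nonneg_left hle hA.le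
        _ = A * Real.exp D * Real.exp (τ / 2) := by rw [Real.exp_add]; ring
    nlinarith [h1, h2]
  have hanti : AntitoneOn G (Set.Ici T) := by
    apply antitoneOn_of_deriv_nonpos (convex_Ici T)
    · intro τ hτ
      exact (hGderiv τ hτ).continuousAt.continuousWithinAt
    · intro τ hτ
      rw [interior_Ici] at hτ
      exact ((hGderiv τ (le_of_lt hτ)).differentiableAt).differentiableWithinAt
    · intro τ hτ
      rw [interior_Ici] at hτ
      rw [(hGderiv τ (le_of_lt hτ)).deriv]
      exact hkey τ (le_of_lt hτ)
  refine ⟨μ T * y T * Real.exp (-T / 2) + 2 * A * Real.exp D, ?_, ?_⟩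
  · have h1 : 0 ≤ μ T * y T * Real.exp (-T / 2) := by
      have := hnonneg T le_rfl
      positivity
    have : 0 < 2 * A * Real.exp D := by positivity
    linarith
  · intro τ hτ
    have hGle : G τ ≤ G T := hanti (Set.self_mem_Ici) hτ hτ
    -- μ τ * y τ ≤ μ T * y T + 2 A e^D e^{τ/2}
    have h1 : μ τ * y τ ≤ μ T * y T + 2 * A * Real.exp D * Real.exp (τ / 2) := by
      have hTpos : (0:ℝ) < Real.exp (T / 2) := Real.exp_pos _
      have := hGle
      simp only [hG] at this
      nlinarith [mul_nonneg (mul_nonneg (mul_nonneg (by norm_num : (0:ℝ) ≤ 2) hA.le)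
        (Real.exp_pos D).le) (Real.exp_pos (T / 2)).le]
    -- e^{-τ/2} * μ τ ≥ e^{τ/2}
    have h2 : Real.exp (τ / 2) ≤ Real.exp (-τ / 2) * μ τ := by
      have : Real.exp (-τ / 2) * μ τ = Real.exp (τ / 2 + 2 * C * Real.exp (-τ / 2)) := by
        rw [hμ, ← Real.exp_add]; ring_nf
      rw [this]
      apply Real.exp_le_exp.2
      have : 0 ≤ 2 * C * Real.exp (-τ / 2) := by positivity
      linarith
    -- μ T * y T ≤ μ T * y T * e^{-T/2} * e^{τ/2}
    have h3 : μ T * y T ≤ μ T * y T * Real.exp (-T / 2) * Real.exp (τ / 2) := by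
      have hone : (1:ℝ) ≤ Real.exp (-T / 2) * Real.exp (τ / 2) := by
        rw [← Real.exp_add]
        have : (0:ℝ) ≤ -T / 2 + τ / 2 := by linarith
        calc (1:ℝ) = Real.exp 0 := (Real.exp_zero).symm
          _ ≤ _ := Real.exp_le_exp.2 this
      have hyT : 0 ≤ μ T * y T := mul_nonneg (hμpos T).le (hnonneg T le_rfl)
      nlinarith
    -- combine: y τ * μ τ ≤ K * e^{-τ/2} * μ τ
    have h4 : μ τ * y τ ≤ (μ T * y T * Real.exp (-T / 2) + 2 * A * Real.exp D)
        * (Real.exp (-τ / 2) * μ τ) := by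
      have hK1 : 0 ≤ μ T * y T * Real.exp (-T / 2) := by
        have := hnonneg T le_rfl; positivity
      have hK2 : (0:ℝ) ≤ 2 * A * Real.exp D := by positivity
      calc μ τ * y τ ≤ μ T * y T + 2 * A * Real.exp D * Real.exp (τ / 2) := h1
        _ ≤ μ T * y T * Real.exp (-T / 2) * Real.exp (τ / 2)
            + 2 * A * Real.exp D * Real.exp (τ / 2) := by linarith
        _ = (μ T * y T * Real.exp (-T / 2) + 2 * A * Real.exp D) * Real.exp (τ / 2) := by ring
        _ ≤ (μ T * y T * Real.exp (-T / 2) + 2 * A * Real.exp D)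
            * (Real.exp (-τ / 2) * μ τ) := by
            apply mul_le_mul_of_nonneg_left h2
            linarith
    have := (mul_le_mul_iff_of_pos_right (hμpos τ)).mp (by linarith [h4] :
      y τ * μ τ ≤ ((μ T * y T * Real.exp (-T / 2) + 2 * A * Real.exp D)
        * Real.exp (-τ / 2)) * μ τ)
    linarith
end

section
/- Define H(z) = -(√z/4)·Σ_{n=0}^∞ (zⁿ/n!)·Γ(n - 1/2)/Γ(n + 3/2) for z > 0. Then H(z)/(z^{-3/2}·e^{z}) → -1/4 as z → ∞. -/
open Real Filter
open scoped Nat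

/-- Boundedness + comparison to the exponential series gives summability. -/
lemma summable_aux {c : ℕ → ℝ} {M : ℝ} (hM : ∀ n, |c n| ≤ M) (z : ℝ) :
    Summable (fun n : ℕ => c n * z ^ n / n !) := by
  apply Summable.of_norm_bounded
    ((Real.summable_pow_div_factorial |z|).mul_left M)
  intro n
  have h : ‖c n * z ^ n / (n !)‖ = |c n| * (|z| ^ n / n !) := by
    rw [Real.norm_eq_abs, abs_div, abs_mul, abs_pow, Nat.abs_cast]
    ring
  rw [h]
  exact mul_le_mul_of_nonneg_right (hM n) (by positivity)

lemma exists_bound {d : ℕ → ℝ} {L : ℝ} (hd : Tendsto d atTop (nhds L)) :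
    ∃ M, ∀ n, |d n| ≤ M := by
  obtain ⟨M, hM⟩ := (hd.abs).bddAbove_range
  exact ⟨M, fun n => hM ⟨n, rfl⟩⟩

lemma exp_tsum (z : ℝ) : ∑' n : ℕ, z ^ n / n ! = Real.exp z := by
  rw [Real.exp_eq_exp_ℝ, NormedSpace.exp_eq_tsum_div]

set_option maxHeartbeats 1000000 in
/-- The Abelian lemma: if `d n → 0` then `e^{-z} ∑ d n z^n/n! → 0`. -/
lemma abelian_zero {d : ℕ → ℝ} (hd : Tendsto d atTop (nhds 0)) :
    Tendsto (fun z : ℝ => Real.exp (-z) * ∑' n : ℕ, d n * z ^ n / n !)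
      atTop (nhds 0) := by
  obtain ⟨M, hM⟩ := exists_bound hd
  have hM0 : 0 ≤ M := le_trans (abs_nonneg _) (hM 0)
  rw [Metric.tendsto_nhds]
  intro ε hε
  obtain ⟨N, hN⟩ := (Metric.tendsto_atTop.mp hd) (ε / 2) (by positivity)
  have hN' : ∀ n, N ≤ n → |d n| ≤ ε / 2 := by
    intro n hn
    have := hN n hn
    rw [Real.dist_0_eq_abs] at this
    exact this.le
  have hpoly : Tendsto (fun z : ℝ => (N : ℝ) * M * (z ^ N * Real.exp (-z)))
      atTop (nhds 0) := by
    simpa using (tendsto_pow_mul_exp_neg_atTop_nhds_zero N).const_mul ((N : ℝ) * M)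
  filter_upwards [hpoly.eventually_lt_const (by positivity : (0:ℝ) < ε / 2),
    eventually_ge_atTop (1 : ℝ)] with z hz2 hz1
  have hz0 : (0 : ℝ) ≤ z := le_trans zero_le_one hz1
  -- summability facts
  have hsum : Summable (fun n : ℕ => d n * z ^ n / n !) := summable_aux hM z
  have hsumabs : Summable (fun n : ℕ => |d n| * z ^ n / n !) :=
    summable_aux (c := fun n => |d n|) (fun n => by rw [abs_abs]; exact hM n) z
  have hsumexp : Summable (fun n : ℕ => z ^ n / n !) := Real.summable_pow_div_factorial z
  have habs_eq : ∀ n : ℕ, ‖d n * z ^ n / (n !)‖ = |d n| * z ^ n / n ! := by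
    intro n
    rw [Real.norm_eq_abs, abs_div, abs_mul, abs_pow, Nat.abs_cast, abs_of_nonneg hz0]
  have habs : |(∑' n : ℕ, d n * z ^ n / n !)| ≤ ∑' n : ℕ, |d n| * z ^ n / n ! := by
    have h := norm_tsum_le_tsum_norm (f := fun n : ℕ => d n * z ^ n / (n !))
      (by simpa only [habs_eq] using hsumabs)
    simpa only [habs_eq, Real.norm_eq_abs] using h
  -- split the absolute sum at N
  have hsplit : ∑' n : ℕ, |d n| * z ^ n / n ! =
      (∑ i ∈ Finset.range N, |d i| * z ^ i / i !) +
        ∑' i : ℕ, |d (i + N)| * z ^ (i + N) / (i + N)! :=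
    (Summable.sum_add_tsum_nat_add N hsumabs).symm
  have hhead : (∑ i ∈ Finset.range N, |d i| * z ^ i / i !) ≤ (N : ℝ) * (M * z ^ N) := by
    have : ∀ i ∈ Finset.range N, |d i| * z ^ i / i ! ≤ M * z ^ N := by
      intro i hi
      have hiN : i ≤ N := (Finset.mem_range.mp hi).le
      have h1 : z ^ i ≤ z ^ N := pow_le_pow_right₀ hz1 hiN
      have h2 : |d i| * z ^ i / i ! ≤ M * z ^ i / i ! := by
        gcongr
        exact hM i
      have h3 : M * z ^ i / i ! ≤ M * z ^ i := by
        apply div_le_self (by positivity)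
        exact_mod_cast Nat.one_le_iff_ne_zero.mpr (Nat.factorial_ne_zero i)
      have h4 : M * z ^ i ≤ M * z ^ N := by gcongr
      linarith
    calc (∑ i ∈ Finset.range N, |d i| * z ^ i / i !)
        ≤ ∑ _i ∈ Finset.range N, M * z ^ N := Finset.sum_le_sum this
      _ = (N : ℝ) * (M * z ^ N) := by
          rw [Finset.sum_const, Finset.card_range, nsmul_eq_mul]
  have hshift_sum : Summable (fun i : ℕ => z ^ (i + N) / (i + N)!) :=
    (summable_nat_add_iff N).mpr hsumexp
  have hshift_sum' : Summable (fun i : ℕ => |d (i + N)| * z ^ (i + N) / (i + N)!) :=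
    (summable_nat_add_iff N).mpr hsumabs
  have htail : (∑' i : ℕ, |d (i + N)| * z ^ (i + N) / (i + N)!) ≤
      ε / 2 * Real.exp z := by
    have step1 : (∑' i : ℕ, |d (i + N)| * z ^ (i + N) / (i + N)!) ≤
        ∑' i : ℕ, ε / 2 * (z ^ (i + N) / (i + N)!) := by
      apply Summable.tsum_le_tsum _ hshift_sum' (hshift_sum.mul_left (ε / 2))
      intro i
      rw [mul_div_assoc]
      exact mul_le_mul_of_nonneg_right (hN' (i + N) le_add_self) (by positivity)
    have step2 : (∑' i : ℕ, ε / 2 * (z ^ (i + N) / (i + N)!)) =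
        ε / 2 * ∑' i : ℕ, z ^ (i + N) / (i + N)! := tsum_mul_left
    have step3 : (∑' i : ℕ, z ^ (i + N) / (i + N)!) ≤ Real.exp z := by
      have h := Summable.sum_add_tsum_nat_add N hsumexp
      rw [exp_tsum z] at h
      have hnn : (0 : ℝ) ≤ ∑ i ∈ Finset.range N, z ^ i / i ! :=
        Finset.sum_nonneg fun i _ => by positivity
      linarith
    calc (∑' i : ℕ, |d (i + N)| * z ^ (i + N) / (i + N)!)
        ≤ ε / 2 * ∑' i : ℕ, z ^ (i + N) / (i + N)! := by rw [← step2]; exact step1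
      _ ≤ ε / 2 * Real.exp z := mul_le_mul_of_nonneg_left step3 (by linarith)
  have hez : Real.exp (-z) * Real.exp z = 1 := by
    rw [← Real.exp_add]; simp
  rw [Real.dist_0_eq_abs, abs_mul, abs_of_pos (Real.exp_pos (-z))]
  calc Real.exp (-z) * |∑' n : ℕ, d n * z ^ n / n !|
      ≤ Real.exp (-z) * ((N : ℝ) * (M * z ^ N) + ε / 2 * Real.exp z) := by
        gcongr
        rw [hsplit] at habs
        linarith
    _ = (N : ℝ) * M * (z ^ N * Real.exp (-z)) + ε / 2 * (Real.exp (-z) * Real.exp z) := by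
        ring
    _ = (N : ℝ) * M * (z ^ N * Real.exp (-z)) + ε / 2 := by rw [hez, mul_one]
    _ < ε / 2 + ε / 2 := by linarith
    _ = ε := by ring

lemma nat_sub_half_ne_zero (n : ℕ) : (n : ℝ) - 1 / 2 ≠ 0 := by
  intro h
  rcases n with _ | m
  · norm_num at h
  · have h0 : (0 : ℝ) ≤ (m : ℝ) := Nat.cast_nonneg m
    push_cast at h
    linarith

lemma gamma_ratio (n : ℕ) :
    Real.Gamma ((n : ℝ) - 1 / 2) / Real.Gamma ((n : ℝ) + 3 / 2) =
      (((n : ℝ) + 1 / 2) * ((n : ℝ) - 1 / 2))⁻¹ := by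
  have h1 : ((n : ℝ) - 1 / 2) ≠ 0 := nat_sub_half_ne_zero n
  have h2 : ((n : ℝ) + 1 / 2) ≠ 0 := by positivity
  have hG : Real.Gamma ((n : ℝ) - 1 / 2) ≠ 0 := by
    apply Real.Gamma_ne_zero
    intro m h
    have h' : ((2 * (n + m) : ℕ) : ℝ) = ((1 : ℕ) : ℝ) := by push_cast; linarith
    have h'' : 2 * (n + m) = 1 := Nat.cast_injective h'
    omega
  have e1 : Real.Gamma ((n : ℝ) + 3 / 2) =
      ((n : ℝ) + 1 / 2) * Real.Gamma ((n : ℝ) + 1 / 2) := by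
    rw [show (n : ℝ) + 3 / 2 = ((n : ℝ) + 1 / 2) + 1 by ring, Real.Gamma_add_one h2]
  have e2 : Real.Gamma ((n : ℝ) + 1 / 2) =
      ((n : ℝ) - 1 / 2) * Real.Gamma ((n : ℝ) - 1 / 2) := by
    rw [show (n : ℝ) + 1 / 2 = ((n : ℝ) - 1 / 2) + 1 by ring, Real.Gamma_add_one h1]
  have e3 : Real.Gamma ((n : ℝ) + 3 / 2) =
      Real.Gamma ((n : ℝ) - 1 / 2) * (((n : ℝ) + 1 / 2) * ((n : ℝ) - 1 / 2)) := by
    rw [e1, e2]; ring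
  rw [e3, div_mul_cancel_left₀ hG]

/-- The key limit: `z² e^{-z} S(z) → 1`. -/
lemma key_limit :
    Tendsto (fun z : ℝ => z ^ 2 * Real.exp (-z) *
      ∑' n : ℕ, z ^ n / (Nat.factorial n) *
        (Real.Gamma ((n : ℝ) - 1 / 2) / Real.Gamma ((n : ℝ) + 3 / 2)))
      atTop (nhds 1) := by
  set g : ℕ → ℝ := fun n => (((n : ℝ) + 1 / 2) * ((n : ℝ) - 1 / 2))⁻¹ with hg
  set d : ℕ → ℝ := fun n =>
    ((n : ℝ) + 1) * ((n : ℝ) + 2) * g n - 1 with hd_def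
  -- d → 0
  have h1 : Tendsto (fun n : ℕ => ((n : ℝ) + 1) / ((n : ℝ) + 1 / 2)) atTop (nhds 1) := by
    have ha : Tendsto (fun n : ℕ => (n : ℝ) + 1 / 2) atTop atTop :=
      tendsto_atTop_add_const_right _ _ tendsto_natCast_atTop_atTop
    have hinv : Tendsto (fun n : ℕ => ((n : ℝ) + 1 / 2)⁻¹) atTop (nhds 0) :=
      ha.inv_tendsto_atTop
    have := (hinv.const_mul (1 / 2 : ℝ)).const_add (1 : ℝ)
    rw [mul_zero, add_zero] at this
    apply this.congr
    intro n
    have h2 : ((n : ℝ) + 1 / 2) ≠ 0 := by positivity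
    rw [show ((n : ℝ) + 1) = ((n : ℝ) + 1 / 2) + 1 / 2 by ring, add_div,
      div_self h2]
    ring
  have h2 : Tendsto (fun n : ℕ => ((n : ℝ) + 2) / ((n : ℝ) - 1 / 2)) atTop (nhds 1) := by
    have ha : Tendsto (fun n : ℕ => (n : ℝ) - 1 / 2) atTop atTop :=
      tendsto_atTop_add_const_right _ _ tendsto_natCast_atTop_atTop
    have hinv : Tendsto (fun n : ℕ => ((n : ℝ) - 1 / 2)⁻¹) atTop (nhds 0) :=
      ha.inv_tendsto_atTop
    have := (hinv.const_mul (5 / 2 : ℝ)).const_add (1 : ℝ)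
    rw [mul_zero, add_zero] at this
    apply this.congr
    intro n
    have hne : ((n : ℝ) - 1 / 2) ≠ 0 := nat_sub_half_ne_zero n
    rw [show ((n : ℝ) + 2) = ((n : ℝ) - 1 / 2) + 5 / 2 by ring, add_div,
      div_self hne]
    ring
  have hr : Tendsto (fun n : ℕ => ((n : ℝ) + 1) * ((n : ℝ) + 2) * g n)
      atTop (nhds 1) := by
    have := h1.mul h2
    rw [mul_one] at this
    apply this.congr
    intro n
    have hne1 : ((n : ℝ) + 1 / 2) ≠ 0 := by positivity
    have hne2 : ((n : ℝ) - 1 / 2) ≠ 0 := nat_sub_half_ne_zero n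
    simp only [hg]
    rw [div_mul_div_comm, div_eq_mul_inv]
  have hd : Tendsto d atTop (nhds 0) := by
    have := hr.sub_const 1
    rw [sub_self] at this
    exact this
  -- pad d with two zeros
  set D : ℕ → ℝ := fun m => if 2 ≤ m then d (m - 2) else 0 with hD_def
  have hD2 : ∀ n : ℕ, D (n + 2) = d n := by
    intro n
    simp [hD_def]
  have hD : Tendsto D atTop (nhds 0) := by
    apply Tendsto.congr' _ (hd.comp (tendsto_sub_atTop_nat 2))
    filter_upwards [eventually_ge_atTop 2] with m hm
    simp [hD_def, hm, Function.comp]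
  obtain ⟨M, hMD⟩ := exists_bound hD
  obtain ⟨M', hMd⟩ := exists_bound hd
  -- the two tendsto pieces
  have t1 := abelian_zero hD
  have t2 : Tendsto (fun z : ℝ => 1 - Real.exp (-z) - z * Real.exp (-z))
      atTop (nhds 1) := by
    have a1 : Tendsto (fun z : ℝ => Real.exp (-z)) atTop (nhds 0) :=
      Real.tendsto_exp_neg_atTop_nhds_zero
    have a2 : Tendsto (fun z : ℝ => z * Real.exp (-z)) atTop (nhds 0) := by
      simpa using tendsto_pow_mul_exp_neg_atTop_nhds_zero 1
    have := ((tendsto_const_nhds (x := (1:ℝ)) (f := atTop)).sub a1).sub a2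
    simpa using this
  have hmain : Tendsto (fun z : ℝ =>
      Real.exp (-z) * (∑' m : ℕ, D m * z ^ m / m !) +
        (1 - Real.exp (-z) - z * Real.exp (-z))) atTop (nhds 1) := by
    have := t1.add t2
    rwa [zero_add] at this
  apply hmain.congr'
  filter_upwards [eventually_ge_atTop (1 : ℝ)] with z hz1
  have hz0 : (0 : ℝ) < z := lt_of_lt_of_le zero_lt_one hz1
  -- rewrite the Gamma sum
  have hSg : (∑' n : ℕ, z ^ n / (Nat.factorial n) *
      (Real.Gamma ((n : ℝ) - 1 / 2) / Real.Gamma ((n : ℝ) + 3 / 2))) =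
      ∑' n : ℕ, z ^ n / n ! * g n :=
    tsum_congr fun n => by rw [gamma_ratio n]
  -- summability
  have hgb : ∀ n : ℕ, |(fun n : ℕ => g n * ((n:ℝ) + 1) * ((n:ℝ) + 2)) n| ≤ M' + 1 := by
    intro n
    have := hMd n
    simp only [hd_def] at this
    have h : |((n : ℝ) + 1) * ((n : ℝ) + 2) * g n| ≤ M' + 1 := by
      have := abs_sub_abs_le_abs_sub (((n : ℝ) + 1) * ((n : ℝ) + 2) * g n) 1
      simp only [abs_one] at this
      linarith
    calc |g n * ((n:ℝ) + 1) * ((n:ℝ) + 2)|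
        = |((n : ℝ) + 1) * ((n : ℝ) + 2) * g n| := by ring_nf
      _ ≤ M' + 1 := h
  have hsum_d : Summable (fun n : ℕ => d n * z ^ (n + 2) / (n + 2)!) := by
    have := (summable_nat_add_iff (f := fun m => D m * z ^ m / m !) 2).mpr
      (summable_aux hMD z)
    apply this.congr
    intro n
    rw [hD2]
  have hsum_e : Summable (fun n : ℕ => z ^ (n + 2) / (n + 2)!) :=
    (summable_nat_add_iff 2).mpr (Real.summable_pow_div_factorial z)
  -- term identity
  have hterm : ∀ n : ℕ, z ^ 2 * (z ^ n / n ! * g n) =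
      d n * z ^ (n + 2) / (n + 2)! + z ^ (n + 2) / (n + 2)! := by
    intro n
    have hfact : ((n + 2)! : ℝ) = ((n : ℝ) + 2) * ((n : ℝ) + 1) * n ! := by
      rw [show n + 2 = (n + 1) + 1 by ring, Nat.factorial_succ, Nat.factorial_succ]
      push_cast
      ring
    have hfpos : (0 : ℝ) < (n ! : ℝ) := by
      exact_mod_cast Nat.factorial_pos n
    have hf2pos : (0 : ℝ) < ((n + 2)! : ℝ) := by
      exact_mod_cast Nat.factorial_pos (n + 2)
    have hA : ((n : ℝ) + 1) * ((n : ℝ) + 2) / ((n + 2)! : ℝ) = 1 / (n ! : ℝ) := by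
      rw [div_eq_div_iff hf2pos.ne' hfpos.ne', hfact]
      ring
    calc z ^ 2 * (z ^ n / n ! * g n)
        = z ^ (n + 2) * (1 / (n ! : ℝ)) * g n := by rw [pow_add]; ring
      _ = z ^ (n + 2) * (((n : ℝ) + 1) * ((n : ℝ) + 2) / ((n + 2)! : ℝ)) * g n := by
          rw [hA]
      _ = d n * z ^ (n + 2) / (n + 2)! + z ^ (n + 2) / (n + 2)! := by
          simp only [hd_def]
          ring
  -- summed identity
  have hDsum_eq : (∑' m : ℕ, D m * z ^ m / m !) =
      ∑' n : ℕ, d n * z ^ (n + 2) / (n + 2)! := by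
    rw [← Summable.sum_add_tsum_nat_add 2 (summable_aux hMD z)]
    have hzero : (∑ i ∈ Finset.range 2, D i * z ^ i / i !) = 0 := by
      rw [Finset.sum_range_succ, Finset.sum_range_one]
      simp [hD_def]
    rw [hzero, zero_add]
    exact tsum_congr fun n => by rw [hD2]
  have hesum_eq : (∑' n : ℕ, z ^ (n + 2) / (n + 2)!) = Real.exp z - 1 - z := by
    have h := Summable.sum_add_tsum_nat_add 2 (Real.summable_pow_div_factorial z)
    rw [exp_tsum z] at h
    have h2 : (∑ i ∈ Finset.range 2, z ^ i / i !) = 1 + z := by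
      rw [Finset.sum_range_succ, Finset.sum_range_one]
      norm_num
    rw [h2] at h
    linarith
  have hez : Real.exp (-z) * Real.exp z = 1 := by
    rw [← Real.exp_add]; simp
  -- assemble
  rw [hSg] at *
  have hz2S : z ^ 2 * (∑' n : ℕ, z ^ n / n ! * g n) =
      (∑' n : ℕ, d n * z ^ (n + 2) / (n + 2)!) + (Real.exp z - 1 - z) := by
    calc z ^ 2 * (∑' n : ℕ, z ^ n / n ! * g n)
        = ∑' n : ℕ, z ^ 2 * (z ^ n / n ! * g n) := tsum_mul_left.symm
      _ = ∑' n : ℕ, (d n * z ^ (n + 2) / (n + 2)! + z ^ (n + 2) / (n + 2)!) :=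
          tsum_congr hterm
      _ = (∑' n : ℕ, d n * z ^ (n + 2) / (n + 2)!) +
            ∑' n : ℕ, z ^ (n + 2) / (n + 2)! := Summable.tsum_add hsum_d hsum_e
      _ = (∑' n : ℕ, d n * z ^ (n + 2) / (n + 2)!) + (Real.exp z - 1 - z) := by
          rw [hesum_eq]
  rw [hDsum_eq]
  linear_combination (-Real.exp (-z)) * hz2S - hez

noncomputable def Hfun (z : ℝ) : ℝ :=
  -(Real.sqrt z / 4) *
    ∑' n : ℕ, z ^ n / (Nat.factorial n) *
      (Real.Gamma ((n : ℝ) - 1 / 2) / Real.Gamma ((n : ℝ) + 3 / 2))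

theorem Hfun_asymptotic :
    Tendsto (fun z => Hfun z / (z ^ (-(3:ℝ)/2) * Real.exp z)) atTop (nhds (-1/4)) := by
  have hk := key_limit.const_mul (-(1/4) : ℝ)
  rw [mul_one] at hk
  have : -(1/4 : ℝ) = -1/4 := by norm_num
  rw [this] at hk
  apply hk.congr'
  filter_upwards [eventually_ge_atTop (1 : ℝ)] with z hz1
  have hz0 : (0 : ℝ) < z := lt_of_lt_of_le zero_lt_one hz1
  set S := ∑' n : ℕ, z ^ n / (Nat.factorial n) *
      (Real.Gamma ((n : ℝ) - 1 / 2) / Real.Gamma ((n : ℝ) + 3 / 2)) with hS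
  have hHfun : Hfun z = -(Real.sqrt z / 4) * S := rfl
  have hrpow : z ^ (-(3:ℝ)/2) = (z ^ ((3:ℝ)/2))⁻¹ := by
    rw [show (-(3:ℝ)/2) = -((3:ℝ)/2) by ring, Real.rpow_neg hz0.le]
  have h32 : z ^ ((3:ℝ)/2) * Real.sqrt z = z ^ 2 := by
    rw [Real.sqrt_eq_rpow, ← Real.rpow_add hz0,
      show ((3:ℝ)/2 + 1/2) = ((2:ℕ):ℝ) by norm_num, Real.rpow_natCast]
  have hrne : z ^ ((3:ℝ)/2) ≠ 0 := by
    positivity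
  have hexpne : Real.exp z ≠ 0 := (Real.exp_pos z).ne'
  have heq : Hfun z / (z ^ (-(3:ℝ)/2) * Real.exp z) =
      -1/4 * (z ^ 2 * Real.exp (-z) * S) := by
    rw [hHfun, hrpow, Real.exp_neg, ← h32]
    field_simp
  exact heq.symm
end

section
/- If M : [T,∞) → ℝ is differentiable, e^{-t}M(t) → 0 as t → ∞, and for all t ≥ T one has |M'(t) - M(t)| ≤ C/√t, then |M(t)| ≤ 2C/√t for all sufficiently large t ≥ T. -/
open Real Filter

theorem mass_stabilization_sqrt_rate
    (M M' : ℝ → ℝ) (T C : ℝ) (hC : 0 < C)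
    (hderiv : ∀ t ≥ T, HasDerivAt M (M' t) t)
    (hlim : Tendsto (fun t => Real.exp (-t) * M t) atTop (nhds 0))
    (hbound : ∀ t ≥ T, |M' t - M t| ≤ C / Real.sqrt t) :
    ∃ T' ≥ T, ∀ t ≥ T', |M t| ≤ 2 * C / Real.sqrt t := by
  set E : ℝ → ℝ := fun s => Real.exp (-s) * M s with hE_def
  set g : ℝ → ℝ := fun s => -(Real.exp (-s) / Real.sqrt s) with hg_def
  set T' : ℝ := max T 1 with hT'def
  refine ⟨T', le_max_left _ _, fun t ht => ?_⟩
  have ht1 : (1:ℝ) ≤ t := le_trans (le_max_right T 1) ht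
  have htT : T ≤ t := le_trans (le_max_left T 1) ht
  have htpos : 0 < t := lt_of_lt_of_le one_pos ht1
  have hexp : ∀ s : ℝ, HasDerivAt (fun u => Real.exp (-u)) (-Real.exp (-s)) s := by
    intro s
    simpa [Function.comp_def] using (Real.hasDerivAt_exp (-s)).comp s ((hasDerivAt_id s).neg)
  have hEderiv : ∀ s ≥ T', HasDerivAt E (Real.exp (-s) * (M' s - M s)) s := by
    intro s hs
    have hsT : T ≤ s := le_trans (le_max_left T 1) hs
    have := (hexp s).mul (hderiv s hsT)
    exact this.congr_deriv (by ring)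
  -- derivative of g
  have hgderiv : ∀ s ≥ T', HasDerivAt g
      ((Real.exp (-s) * Real.sqrt s + Real.exp (-s) * (1 / (2 * Real.sqrt s))) /
        (Real.sqrt s) ^ 2) s := by
    intro s hs
    have hs1 : (1:ℝ) ≤ s := le_trans (le_max_right T 1) hs
    have hspos : 0 < s := lt_of_lt_of_le one_pos hs1
    have h2 : HasDerivAt Real.sqrt (1 / (2 * Real.sqrt s)) s :=
      Real.hasDerivAt_sqrt (ne_of_gt hspos)
    have hsq : Real.sqrt s ≠ 0 := ne_of_gt (Real.sqrt_pos.mpr hspos)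
    have := ((hexp s).div h2 hsq).neg
    exact this.congr_deriv (by ring)
  -- the derivative of g dominates |E'|/C
  have hdom : ∀ s ≥ T', |Real.exp (-s) * (M' s - M s)| ≤
      C * ((Real.exp (-s) * Real.sqrt s + Real.exp (-s) * (1 / (2 * Real.sqrt s))) /
        (Real.sqrt s) ^ 2) := by
    intro s hs
    have hs1 : (1:ℝ) ≤ s := le_trans (le_max_right T 1) hs
    have hspos : 0 < s := lt_of_lt_of_le one_pos hs1
    have hsT : T ≤ s := le_trans (le_max_left T 1) hs
    have hsqpos : 0 < Real.sqrt s := Real.sqrt_pos.mpr hspos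
    have h1 : |Real.exp (-s) * (M' s - M s)| = Real.exp (-s) * |M' s - M s| := by
      rw [abs_mul, abs_of_pos (Real.exp_pos _)]
    rw [h1]
    have h2 : Real.exp (-s) * |M' s - M s| ≤ Real.exp (-s) * (C / Real.sqrt s) :=
      mul_le_mul_of_nonneg_left (hbound s hsT) (Real.exp_pos _).le
    refine h2.trans ?_
    have hsq2 : (Real.sqrt s) ^ 2 = s := Real.sq_sqrt hspos.le
    rw [hsq2]
    have hkey : Real.exp (-s) * (C / Real.sqrt s) = C * ((Real.exp (-s) * Real.sqrt s) / s) := by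
      rw [← hsq2]
      field_simp
      rw [Real.sqrt_sq hsqpos.le]
    rw [hkey]
    have hpos2 : 0 ≤ Real.exp (-s) * (1 / (2 * Real.sqrt s)) := by positivity
    gcongr
    linarith
  -- monotone auxiliary functions on [T', ∞)
  have hmono : ∀ (σ : ℝ), σ = 1 ∨ σ = -1 →
      MonotoneOn (fun s => C * g s + σ * E s) (Set.Ici T') := by
    intro σ hσ
    apply monotoneOn_of_hasDerivWithinAt_nonneg (convex_Ici T')
      (f' := fun s => C * ((Real.exp (-s) * Real.sqrt s +
        Real.exp (-s) * (1 / (2 * Real.sqrt s))) / (Real.sqrt s) ^ 2) +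
        σ * (Real.exp (-s) * (M' s - M s)))
    · intro s hs
      exact (((hgderiv s hs).const_mul C).add ((hEderiv s hs).const_mul σ)).continuousAt.continuousWithinAt
    · intro s hs
      rw [interior_Ici] at hs
      exact ((((hgderiv s hs.le).const_mul C).add
        ((hEderiv s hs.le).const_mul σ)).hasDerivWithinAt)
    · intro s hs
      rw [interior_Ici] at hs
      have := hdom s hs.le
      rcases hσ with h | h <;> subst h
      · have := neg_abs_le (Real.exp (-s) * (M' s - M s))
        linarith [hdom s hs.le]
      · have := le_abs_self (Real.exp (-s) * (M' s - M s))
        nlinarith [hdom s hs.le]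
  -- limits
  have hsqrt_atTop : Tendsto Real.sqrt atTop atTop := by
    refine tendsto_atTop_atTop.2 fun b => ⟨max 0 (b ^ 2), fun a ha => ?_⟩
    have h2 : b ^ 2 ≤ a := le_trans (le_max_right _ _) ha
    calc b ≤ |b| := le_abs_self b
      _ = Real.sqrt (b ^ 2) := (Real.sqrt_sq_eq_abs b).symm
      _ ≤ Real.sqrt a := Real.sqrt_le_sqrt h2
  have hg0 : Tendsto g atTop (nhds 0) := by
    have h1 : Tendsto (fun s => Real.exp (-s) * (Real.sqrt s)⁻¹) atTop (nhds 0) := by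
      have := Real.tendsto_exp_neg_atTop_nhds_zero.mul
        (hsqrt_atTop.inv_tendsto_atTop)
      simpa using this
    have : Tendsto (fun s => -(Real.exp (-s) * (Real.sqrt s)⁻¹)) atTop (nhds 0) := by
      simpa using h1.neg
    refine this.congr fun s => ?_
    simp [hg_def, div_eq_mul_inv]
  have hlim' : ∀ (σ : ℝ), Tendsto (fun s => C * g s + σ * E s) atTop (nhds 0) := by
    intro σ
    have h := (hg0.const_mul C).add (hlim.const_mul σ)
    simpa only [mul_zero, add_zero] using h
  -- conclude pointwise bound
  have hle : ∀ (σ : ℝ), σ = 1 ∨ σ = -1 → C * g t + σ * E t ≤ 0 := by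
    intro σ hσ
    refine ge_of_tendsto (hlim' σ) ?_
    filter_upwards [eventually_ge_atTop t] with u hu
    exact hmono σ hσ (Set.mem_Ici.mpr ht) (Set.mem_Ici.mpr (le_trans ht hu)) hu
  have h1 := hle 1 (Or.inl rfl)
  have h2 := hle (-1) (Or.inr rfl)
  have hgt : C * g t = -(C * (Real.exp (-t) / Real.sqrt t)) := by
    simp only [hg_def]
    ring
  have hgt2 : g t = -(Real.exp (-t) / Real.sqrt t) := rfl
  have hEbound : |E t| ≤ C * (Real.exp (-t) / Real.sqrt t) := by
    rw [hgt2] at h1 h2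
    rw [abs_le]
    constructor
    · nlinarith
    · nlinarith
  -- translate to M
  have hMt : M t = Real.exp t * E t := by
    simp only [hE_def]
    rw [← mul_assoc, ← Real.exp_add]
    simp
  have habs : |M t| = Real.exp t * |E t| := by
    rw [hMt, abs_mul, abs_of_pos (Real.exp_pos _)]
  rw [habs]
  have : Real.exp t * |E t| ≤ Real.exp t * (C * (Real.exp (-t) / Real.sqrt t)) :=
    mul_le_mul_of_nonneg_left hEbound (Real.exp_pos _).le
  refine this.trans ?_
  have hsimp : Real.exp t * (C * (Real.exp (-t) / Real.sqrt t)) = C / Real.sqrt t := by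
    rw [div_eq_mul_inv, div_eq_mul_inv]
    rw [show Real.exp t * (C * (Real.exp (-t) * (Real.sqrt t)⁻¹)) =
      (Real.exp t * Real.exp (-t)) * (C * (Real.sqrt t)⁻¹) by ring]
    rw [← Real.exp_add]
    simp
  rw [hsimp]
  have hsqpos : 0 < Real.sqrt t := Real.sqrt_pos.mpr htpos
  rw [div_le_div_iff₀ hsqpos hsqpos]
  nlinarith
end

section
/- If M : [T,∞) → ℝ is differentiable, e^{-t}M(t) → 0 as t → ∞, and for all t ≥ T one has M'(t) - M(t) ≤ -c/√t with c > 0 (one-sided bound), then M(t) ≥ c·(1 - e^{-t})/√(2t) for all t ≥ T; in particular |M(t)| ≳ 1/√t for large t. -/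
open Real Filter

theorem mass_lower_bound_one_sided
    (M M' : ℝ → ℝ) (T c : ℝ) (hc : 0 < c)
    (hderiv : ∀ t ≥ T, HasDerivAt M (M' t) t)
    (hlim : Tendsto (fun t => Real.exp (-t) * M t) atTop (nhds 0))
    (hbound : ∀ t ≥ T, M' t - M t ≤ -c / Real.sqrt t) :
    ∀ t ≥ T, c * (1 - Real.exp (-t)) / Real.sqrt (2 * t) ≤ M t := by
  set g : ℝ → ℝ := fun s => Real.exp (-s) * M s with hgdef
  have hexp : ∀ x : ℝ, HasDerivAt (fun s : ℝ => Real.exp (-s)) (-Real.exp (-x)) x := by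
    intro x
    simpa [Function.comp_def] using (Real.hasDerivAt_exp (-x)).comp x ((hasDerivAt_id x).neg)
  have hgderiv : ∀ s ≥ T, HasDerivAt g (Real.exp (-s) * (M' s - M s)) s := by
    intro s hs
    have := (hexp s).mul (hderiv s hs)
    refine this.congr_deriv ?_
    ring
  have hganti : AntitoneOn g (Set.Ici T) := by
    apply antitoneOn_of_deriv_nonpos (convex_Ici T)
    · intro x hx
      exact (hgderiv x hx).continuousAt.continuousWithinAt
    · intro x hx
      rw [interior_Ici] at hx
      exact ((hgderiv x hx.le).differentiableAt.differentiableWithinAt)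
    · intro x hx
      rw [interior_Ici] at hx
      rw [(hgderiv x hx.le).deriv]
      have hb := hbound x hx.le
      have h1 : (-c) / Real.sqrt x ≤ 0 :=
        div_nonpos_of_nonpos_of_nonneg (by linarith) (Real.sqrt_nonneg x)
      have h2 : M' x - M x ≤ 0 := le_trans (by simpa using hb) h1
      have he : (0:ℝ) < Real.exp (-x) := Real.exp_pos _
      nlinarith
  have hgnn : ∀ s ≥ T, 0 ≤ g s := by
    intro s hs
    refine le_of_tendsto hlim ?_
    filter_upwards [eventually_ge_atTop s] with u hu
    exact hganti hs (le_trans hs hu) hu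
  intro t ht
  rcases le_or_gt t 0 with h0 | h0
  · have hs0 : Real.sqrt (2 * t) = 0 := by
      rw [Real.sqrt_eq_zero']
      linarith
    rw [hs0, div_zero]
    have h1 := hgnn t ht
    have he : (0:ℝ) < Real.exp (-t) := Real.exp_pos _
    simp only [hgdef] at h1
    nlinarith
  · have hst : 0 < Real.sqrt (2 * t) := Real.sqrt_pos.mpr (by linarith)
    set K := c / Real.sqrt (2 * t) with hK
    have hKpos : 0 < K := div_pos hc hst
    set G : ℝ → ℝ := fun s => g s - K * Real.exp (-s) with hGdef
    have hGderiv : ∀ x ∈ Set.Icc t (2 * t),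
        HasDerivAt G (Real.exp (-x) * (M' x - M x) + K * Real.exp (-x)) x := by
      intro x hx
      have hxT : T ≤ x := le_trans ht hx.1
      have h2 : HasDerivAt (fun s : ℝ => K * Real.exp (-s)) (K * (-Real.exp (-x))) x :=
        (hexp x).const_mul K
      have := (hgderiv x hxT).sub h2
      refine this.congr_deriv ?_
      ring
    have hGanti : AntitoneOn G (Set.Icc t (2 * t)) := by
      apply antitoneOn_of_deriv_nonpos (convex_Icc t (2 * t))
      · intro x hx
        exact (hGderiv x hx).continuousAt.continuousWithinAt
      · intro x hx
        rw [interior_Icc] at hx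
        exact ((hGderiv x ⟨hx.1.le, hx.2.le⟩).differentiableAt.differentiableWithinAt)
      · intro x hx
        rw [interior_Icc] at hx
        rw [(hGderiv x (Set.mem_Icc.mpr ⟨hx.1.le, hx.2.le⟩)).deriv]
        have hxT : T ≤ x := le_trans ht hx.1.le
        have hb := hbound x hxT
        have hsx : 0 < Real.sqrt x := Real.sqrt_pos.mpr (lt_trans h0 hx.1)
        have hle : Real.sqrt x ≤ Real.sqrt (2 * t) := Real.sqrt_le_sqrt (by linarith [hx.2.le])
        have hKle : K ≤ c / Real.sqrt x := by
          rw [hK]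
          exact div_le_div_of_nonneg_left hc.le hsx hle
        have h3 : M' x - M x ≤ -K := by
          have : -c / Real.sqrt x = -(c / Real.sqrt x) := by ring
          rw [this] at hb
          linarith
        have he : (0:ℝ) < Real.exp (-x) := Real.exp_pos _
        nlinarith
    have hmem1 : t ∈ Set.Icc t (2 * t) := ⟨le_refl t, by linarith⟩
    have hmem2 : 2 * t ∈ Set.Icc t (2 * t) := ⟨by linarith, le_refl _⟩
    have hGcomp : G (2 * t) ≤ G t := hGanti hmem1 hmem2 (by linarith)
    have hg2t : 0 ≤ g (2 * t) := hgnn (2 * t) (by linarith)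
    -- g t ≥ K * (exp(-t) - exp(-(2t)))
    have hgt : K * (Real.exp (-t) - Real.exp (-(2 * t))) ≤ g t := by
      have : g (2 * t) - K * Real.exp (-(2 * t)) ≤ g t - K * Real.exp (-t) := hGcomp
      nlinarith
    -- rewrite goal
    have hexp2 : Real.exp (-(2 * t)) = Real.exp (-t) * Real.exp (-t) := by
      rw [← Real.exp_add]; ring_nf
    have hept : (0:ℝ) < Real.exp (-t) := Real.exp_pos _
    have hfinal : Real.exp (-t) * (K * (1 - Real.exp (-t))) ≤ Real.exp (-t) * M t := by
      calc Real.exp (-t) * (K * (1 - Real.exp (-t)))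
          = K * (Real.exp (-t) - Real.exp (-(2 * t))) := by rw [hexp2]; ring
        _ ≤ g t := hgt
        _ = Real.exp (-t) * M t := rfl
    have := le_of_mul_le_mul_left hfinal hept
    calc c * (1 - Real.exp (-t)) / Real.sqrt (2 * t)
        = K * (1 - Real.exp (-t)) := by rw [hK]; ring
      _ ≤ M t := this
end
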